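/- arXiv:1806.01754 — 2 statements merged into one kernel-verified Lean document; each statement's English description precedes it below -/
import Mathlib

section
/- Score matching identity: Let p(y,x) be a probability density, continuously differentiable in y, and g(y,x) twice continuously differentiable in y. Assume for each j and each x that lim_{|y_j|→∞} (∂g/∂y_j)(y,x) p(y,x) = 0 and all integrals below are finite. Then (1/2)∫∫ ‖∇_y g − ∇_y log q(y|x)‖² p dy dx = ∑_{j=1}^{d_y} ∫∫ [ (1/2)(∂g/∂y_j)² + ∂²g/∂y_j² ] p(y,x) dy dx + C, where C = (1/2)∫∫ ‖∇_y log q(y|x)‖² p dy dx does not depend on g. -/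
set_option maxHeartbeats 1600000

open MeasureTheory Filter
open scoped BigOperators


/-- FTC on the whole real line: if `u` has integrable derivative and tends to `0` at
infinity, then the integral of its derivative is `0`. -/
lemma sm_ftc_zero (u u' : ℝ → ℝ) (hu : ∀ t, HasDerivAt u (u' t) t)
    (hu' : Integrable u') (hlim : Tendsto u (cocompact ℝ) (nhds 0)) :
    ∫ t, u' t = 0 := by
  have h1 : Tendsto (fun n : ℕ => ∫ t in (-(n:ℝ))..(n:ℝ), u' t) atTop (nhds (∫ t, u' t)) :=
    intervalIntegral_tendsto_integral hu' (tendsto_neg_atTop_atBot.comp tendsto_natCast_atTop_atTop)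
      tendsto_natCast_atTop_atTop
  have h2 : ∀ n : ℕ, ∫ t in (-(n:ℝ))..(n:ℝ), u' t = u n - u (-(n:ℝ)) := fun n =>
    intervalIntegral.integral_eq_sub_of_hasDerivAt (fun t _ => hu t) hu'.intervalIntegrable
  have hct : Tendsto u atTop (nhds 0) := hlim.mono_left (by
    rw [cocompact_eq_atBot_atTop]; exact le_sup_right)
  have hcb : Tendsto u atBot (nhds 0) := hlim.mono_left (by
    rw [cocompact_eq_atBot_atTop]; exact le_sup_left)
  have h3 : Tendsto (fun n : ℕ => u n - u (-(n:ℝ))) atTop (nhds (0 - 0)) :=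
    (hct.comp tendsto_natCast_atTop_atTop).sub
      (hcb.comp (tendsto_neg_atTop_atBot.comp tendsto_natCast_atTop_atTop))
  rw [sub_zero] at h3
  exact tendsto_nhds_unique h1 (by simpa only [h2] using h3)

section LineFubini

variable {m : ℕ}

/-- Splitting off the `j`-th coordinate of `EuclideanSpace ℝ (Fin (m+1))`. -/
noncomputable def smLineEquiv (j : Fin (m+1)) :
    (ℝ × (Fin m → ℝ)) ≃ᵐ EuclideanSpace ℝ (Fin (m+1)) :=
  (MeasurableEquiv.piFinSuccAbove (fun _ => ℝ) j).symm.trans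
    (MeasurableEquiv.toLp 2 (Fin (m+1) → ℝ))

lemma smLineEquiv_mp (j : Fin (m+1)) :
    MeasurePreserving (smLineEquiv j) volume volume :=
  ((EuclideanSpace.volume_preserving_symm_measurableEquiv_toLp (Fin (m+1))).symm).comp
    ((volume_preserving_piFinSuccAbove (fun _ => ℝ) j).symm _)

lemma smLineEquiv_apply (j : Fin (m+1)) (t : ℝ) (z : Fin m → ℝ) (i : Fin (m+1)) :
    smLineEquiv j (t, z) i = (Fin.insertNth j t z : Fin (m+1) → ℝ) i := rfl

lemma smLineEquiv_line (j : Fin (m+1)) (t : ℝ) (z : Fin m → ℝ) :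
    smLineEquiv j (t, z) =
      smLineEquiv j (0, z) +
        (t - (smLineEquiv j (0, z)) j) • EuclideanSpace.single j 1 := by
  have h0 : (smLineEquiv j (0, z)) j = 0 := by
    rw [smLineEquiv_apply, Fin.insertNth_apply_same]
  ext i
  rw [h0, sub_zero]
  simp only [PiLp.add_apply, PiLp.smul_apply, EuclideanSpace.single_apply, smul_eq_mul,
    smLineEquiv_apply]
  rcases eq_or_ne i j with rfl | h
  · simp [Fin.insertNth_apply_same]
  · obtain ⟨k, rfl⟩ := Fin.exists_succAbove_eq h
    simp [Fin.insertNth_apply_succAbove, Fin.succAbove_ne]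

/-- If an integrable function integrates to `0` along every line in direction `e_j`
on which it is integrable, then its total integral is `0`. -/
lemma sm_integral_line_zero {n : ℕ} (j : Fin n) (w : EuclideanSpace ℝ (Fin n) → ℝ)
    (hw : Integrable w)
    (h : ∀ y : EuclideanSpace ℝ (Fin n),
      Integrable (fun t => w (y + (t - y j) • EuclideanSpace.single j 1)) →
        ∫ t, w (y + (t - y j) • EuclideanSpace.single j 1) = 0) :
    ∫ y, w y = 0 := by
  obtain ⟨m, rfl⟩ : ∃ m, n = m + 1 := ⟨n - 1, (Nat.succ_pred_eq_of_pos j.pos).symm⟩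
  have hmp := smLineEquiv_mp j
  rw [← hmp.integral_comp (smLineEquiv j).measurableEmbedding w]
  have hint : Integrable (fun q : ℝ × (Fin m → ℝ) => w (smLineEquiv j q)) volume :=
    (hmp.integrable_comp_emb (smLineEquiv j).measurableEmbedding).2 hw
  rw [Measure.volume_eq_prod] at hint
  have heq : (∫ q : ℝ × (Fin m → ℝ), w (smLineEquiv j q))
      = ∫ z, ∫ t, w (smLineEquiv j (t, z)) := by
    rw [Measure.volume_eq_prod]
    exact integral_prod_symm _ hint
  rw [heq]
  have hae : ∀ᵐ z : Fin m → ℝ, Integrable (fun t => w (smLineEquiv j (t, z))) :=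
    hint.prod_left_ae
  rw [← integral_zero (Fin m → ℝ) ℝ]
  refine integral_congr_ae ?_
  filter_upwards [hae] with z hz
  have hfun : (fun t => w (smLineEquiv j (t, z)))
      = fun t => w (smLineEquiv j (0, z) +
          (t - (smLineEquiv j (0, z)) j) • EuclideanSpace.single j 1) := by
    funext t; rw [← smLineEquiv_line]
  rw [hfun]
  exact h _ (by rw [← hfun]; exact hz)

end LineFubini

section IBP

variable {n : ℕ}

lemma sm_hasDerivAt_line (j : Fin n) (G P : EuclideanSpace ℝ (Fin n) → ℝ)
    (hG : ContDiff ℝ 2 G) (hP : ContDiff ℝ 1 P)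
    (y : EuclideanSpace ℝ (Fin n)) (t : ℝ) :
    HasDerivAt (fun t : ℝ =>
        fderiv ℝ G (y + (t - y j) • EuclideanSpace.single j 1) (EuclideanSpace.single j 1) *
          P (y + (t - y j) • EuclideanSpace.single j 1))
      (fderiv ℝ (fun y' => fderiv ℝ G y' (EuclideanSpace.single j 1))
          (y + (t - y j) • EuclideanSpace.single j 1) (EuclideanSpace.single j 1) *
        P (y + (t - y j) • EuclideanSpace.single j 1) +
        fderiv ℝ G (y + (t - y j) • EuclideanSpace.single j 1) (EuclideanSpace.single j 1) *
        fderiv ℝ P (y + (t - y j) • EuclideanSpace.single j 1) (EuclideanSpace.single j 1)) t := by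
  set L := fun t : ℝ => y + (t - y j) • EuclideanSpace.single j 1 with hLdef
  have hLd : HasDerivAt L (EuclideanSpace.single j 1) t := by
    have h : HasDerivAt (fun t : ℝ => t - y j) 1 t := (hasDerivAt_id t).sub_const _
    have h' := (h.smul_const (EuclideanSpace.single j 1)).const_add y
    rw [one_smul] at h'
    exact h'
  have h1 : HasDerivAt (fun s => fderiv ℝ G (L s) (EuclideanSpace.single j 1))
      (fderiv ℝ (fun y' => fderiv ℝ G y' (EuclideanSpace.single j 1)) (L t)
        (EuclideanSpace.single j 1)) t := by
    have hd : DifferentiableAt ℝ (fun y' => fderiv ℝ G y' (EuclideanSpace.single j 1)) (L t) :=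
      (((hG.fderiv_right (m := 1) (by norm_num)).clm_apply contDiff_const).differentiable
        one_ne_zero).differentiableAt
    exact hd.hasFDerivAt.comp_hasDerivAt t hLd
  have h2 : HasDerivAt (fun s => P (L s))
      (fderiv ℝ P (L t) (EuclideanSpace.single j 1)) t := by
    have hd : DifferentiableAt ℝ P (L t) := (hP.differentiable one_ne_zero).differentiableAt
    exact hd.hasFDerivAt.comp_hasDerivAt t hLd
  exact h1.mul h2

/-- Integration by parts in the `j`-th coordinate: the integral of
`∂_j(∂_j G · P)` vanishes. -/
lemma sm_ibp_zero (j : Fin n) (G P : EuclideanSpace ℝ (Fin n) → ℝ)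
    (hG : ContDiff ℝ 2 G) (hP : ContDiff ℝ 1 P)
    (hbd : ∀ y : EuclideanSpace ℝ (Fin n),
      Tendsto (fun t : ℝ =>
          fderiv ℝ G (y + (t - y j) • EuclideanSpace.single j 1) (EuclideanSpace.single j 1) *
            P (y + (t - y j) • EuclideanSpace.single j 1))
        (cocompact ℝ) (nhds 0))
    (hw : Integrable (fun y =>
        fderiv ℝ (fun y' => fderiv ℝ G y' (EuclideanSpace.single j 1)) y
            (EuclideanSpace.single j 1) * P y +
          fderiv ℝ G y (EuclideanSpace.single j 1) *
            fderiv ℝ P y (EuclideanSpace.single j 1))) :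
    ∫ y, (fderiv ℝ (fun y' => fderiv ℝ G y' (EuclideanSpace.single j 1)) y
            (EuclideanSpace.single j 1) * P y +
          fderiv ℝ G y (EuclideanSpace.single j 1) *
            fderiv ℝ P y (EuclideanSpace.single j 1)) = 0 := by
  refine sm_integral_line_zero j _ hw ?_
  intro y hy
  exact sm_ftc_zero _ _ (fun t => sm_hasDerivAt_line j G P hG hP y t) hy (hbd y)

end IBP

section Pointwise
lemma sm_norm_sq_eq {k : ℕ} (v : EuclideanSpace ℝ (Fin k)) : ‖v‖^2 = ∑ j, (v j)^2 := by
  rw [EuclideanSpace.norm_eq, Real.sq_sqrt (by positivity)]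
  simp [Real.norm_eq_abs, sq_abs]

lemma sm_gradient_coord {k : ℕ} (f : EuclideanSpace ℝ (Fin k) → ℝ)
    (x : EuclideanSpace ℝ (Fin k)) (j : Fin k) :
    gradient f x j = fderiv ℝ f x (EuclideanSpace.single j 1) := by
  have h1 : (inner ℝ (gradient f x) (EuclideanSpace.single j 1) : ℝ)
      = fderiv ℝ f x (EuclideanSpace.single j 1) := by
    simp [gradient, InnerProductSpace.toDual_symm_apply]
  rw [← h1, EuclideanSpace.inner_single_right]
  simp

lemma sm_fderiv_log {k : ℕ} (q : EuclideanSpace ℝ (Fin k) → ℝ)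
    (y : EuclideanSpace ℝ (Fin k)) (hq : DifferentiableAt ℝ q y) (hpos : q y ≠ 0)
    (v : EuclideanSpace ℝ (Fin k)) :
    fderiv ℝ (fun y' => Real.log (q y')) y v = (q y)⁻¹ * fderiv ℝ q y v := by
  rw [(hq.hasFDerivAt.log hpos).fderiv]
  simp
end Pointwise

lemma sm_slice {n : ℕ} (G P : EuclideanSpace ℝ (Fin n) → ℝ)
    (hGc : ContDiff ℝ 2 G) (hPc : ContDiff ℝ 1 P) (hPpos : ∀ y, 0 < P y)
    (hbd : ∀ (j : Fin n) (y : EuclideanSpace ℝ (Fin n)),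
      Tendsto (fun t : ℝ =>
          fderiv ℝ G (y + (t - y j) • EuclideanSpace.single j 1) (EuclideanSpace.single j 1) *
            P (y + (t - y j) • EuclideanSpace.single j 1))
        (cocompact ℝ) (nhds 0))
    (h1 : Integrable (fun y =>
      ‖gradient G y - gradient (fun y' => Real.log (P y')) y‖ ^ 2 * P y))
    (h2 : ∀ j : Fin n, Integrable (fun y =>
      ((1 / 2 : ℝ) * (fderiv ℝ G y (EuclideanSpace.single j 1)) ^ 2 +
        fderiv ℝ (fun y' => fderiv ℝ G y' (EuclideanSpace.single j 1)) y
          (EuclideanSpace.single j 1)) * P y))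
    (h3 : Integrable (fun y => ‖gradient (fun y' => Real.log (P y')) y‖ ^ 2 * P y))
    (h4 : ∀ j : Fin n, Integrable (fun y =>
      fderiv ℝ G y (EuclideanSpace.single j 1) *
        fderiv ℝ (fun y' => Real.log (P y')) y (EuclideanSpace.single j 1) * P y)) :
    ∫ y, ((∑ j : Fin n,
        ((1 / 2 : ℝ) * (fderiv ℝ G y (EuclideanSpace.single j 1)) ^ 2 +
          fderiv ℝ (fun y' => fderiv ℝ G y' (EuclideanSpace.single j 1)) y
            (EuclideanSpace.single j 1)) * P y)
      - ((1 / 2 : ℝ) * (‖gradient G y - gradient (fun y' => Real.log (P y')) y‖ ^ 2 * P y)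
        - (1 / 2 : ℝ) * (‖gradient (fun y' => Real.log (P y')) y‖ ^ 2 * P y))) = 0 := by
  have hPd : Differentiable ℝ P := hPc.differentiable one_ne_zero
  -- score times density equals derivative of density
  have hBP : ∀ (k : Fin n) (y : EuclideanSpace ℝ (Fin n)),
      fderiv ℝ (fun y' => Real.log (P y')) y (EuclideanSpace.single k 1) * P y
        = fderiv ℝ P y (EuclideanSpace.single k 1) := by
    intro k y
    rw [sm_fderiv_log P y (hPd y) (hPpos y).ne', mul_comm ((P y)⁻¹) _, mul_assoc,
      inv_mul_cancel₀ (hPpos y).ne', mul_one]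
  -- norms as coordinate sums
  have hsubnorm : ∀ y : EuclideanSpace ℝ (Fin n),
      ‖gradient G y - gradient (fun y' => Real.log (P y')) y‖ ^ 2
        = ∑ j : Fin n, (fderiv ℝ G y (EuclideanSpace.single j 1) -
            fderiv ℝ (fun y' => Real.log (P y')) y (EuclideanSpace.single j 1)) ^ 2 := by
    intro y
    rw [sm_norm_sq_eq]
    refine Finset.sum_congr rfl fun j _ => ?_
    rw [PiLp.sub_apply, sm_gradient_coord, sm_gradient_coord]
  have hlognorm : ∀ y : EuclideanSpace ℝ (Fin n),
      ‖gradient (fun y' => Real.log (P y')) y‖ ^ 2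
        = ∑ j : Fin n,
            (fderiv ℝ (fun y' => Real.log (P y')) y (EuclideanSpace.single j 1)) ^ 2 := by
    intro y
    rw [sm_norm_sq_eq]
    exact Finset.sum_congr rfl fun j _ => by rw [sm_gradient_coord]
  -- continuity facts
  have hcontA : ∀ j : Fin n, Continuous (fun y => fderiv ℝ G y (EuclideanSpace.single j 1)) :=
    fun j => ((ContDiff.fderiv_right (m := 1) hGc (by norm_num)).clm_apply contDiff_const).continuous
  -- integrability of ∂_j G * ∂_j P
  have h4' : ∀ j : Fin n, Integrable (fun y =>
      fderiv ℝ G y (EuclideanSpace.single j 1) * fderiv ℝ P y (EuclideanSpace.single j 1)) := by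
    intro j
    have heq : (fun y => fderiv ℝ G y (EuclideanSpace.single j 1) *
        fderiv ℝ (fun y' => Real.log (P y')) y (EuclideanSpace.single j 1) * P y)
        = fun y => fderiv ℝ G y (EuclideanSpace.single j 1) *
            fderiv ℝ P y (EuclideanSpace.single j 1) := by
      funext y
      rw [mul_assoc, hBP j y]
    rw [← heq]; exact h4 j
  -- the dominating function
  have hΦint : Integrable (fun y =>
      ‖gradient G y - gradient (fun y' => Real.log (P y')) y‖ ^ 2 * P y
        + 2 * (∑ k : Fin n, fderiv ℝ G y (EuclideanSpace.single k 1) *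
            fderiv ℝ P y (EuclideanSpace.single k 1))
        - ‖gradient (fun y' => Real.log (P y')) y‖ ^ 2 * P y) :=
    (h1.add ((integrable_finset_sum Finset.univ (fun k _ => h4' k)).const_mul 2)).sub h3
  have hΦeq : ∀ y : EuclideanSpace ℝ (Fin n),
      ‖gradient G y - gradient (fun y' => Real.log (P y')) y‖ ^ 2 * P y
        + 2 * (∑ k : Fin n, fderiv ℝ G y (EuclideanSpace.single k 1) *
            fderiv ℝ P y (EuclideanSpace.single k 1))
        - ‖gradient (fun y' => Real.log (P y')) y‖ ^ 2 * P y
      = (∑ k : Fin n, (fderiv ℝ G y (EuclideanSpace.single k 1)) ^ 2) * P y := by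
    intro y
    rw [hsubnorm y, hlognorm y, Finset.sum_mul, Finset.sum_mul, Finset.sum_mul, Finset.mul_sum,
      ← Finset.sum_add_distrib, ← Finset.sum_sub_distrib]
    refine Finset.sum_congr rfl fun k _ => ?_
    rw [← hBP k y]
    ring
  -- integrability of (1/2) (∂_j G)^2 P by domination
  have hsq : ∀ j : Fin n, Integrable (fun y =>
      (1 / 2 : ℝ) * (fderiv ℝ G y (EuclideanSpace.single j 1)) ^ 2 * P y) := by
    intro j
    refine hΦint.mono' (Continuous.aestronglyMeasurable ?_) (ae_of_all _ fun y => ?_)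
    · exact (continuous_const.mul ((hcontA j).pow 2)).mul hPc.continuous
    · rw [Real.norm_eq_abs, abs_of_nonneg (mul_nonneg
        (mul_nonneg (by norm_num) (sq_nonneg _)) (hPpos y).le)]
      rw [hΦeq y]
      have hle : (fderiv ℝ G y (EuclideanSpace.single j 1)) ^ 2
          ≤ ∑ k : Fin n, (fderiv ℝ G y (EuclideanSpace.single k 1)) ^ 2 :=
        Finset.single_le_sum (f := fun k => (fderiv ℝ G y (EuclideanSpace.single k 1)) ^ 2)
          (fun k _ => sq_nonneg _) (Finset.mem_univ j)
      nlinarith [(hPpos y).le, sq_nonneg (fderiv ℝ G y (EuclideanSpace.single j 1))]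
  -- integrability of the divergence terms
  have hW : ∀ j : Fin n, Integrable (fun y =>
      fderiv ℝ (fun y' => fderiv ℝ G y' (EuclideanSpace.single j 1)) y
          (EuclideanSpace.single j 1) * P y +
        fderiv ℝ G y (EuclideanSpace.single j 1) *
          fderiv ℝ P y (EuclideanSpace.single j 1)) := by
    intro j
    have heq : (fun y =>
        fderiv ℝ (fun y' => fderiv ℝ G y' (EuclideanSpace.single j 1)) y
            (EuclideanSpace.single j 1) * P y +
          fderiv ℝ G y (EuclideanSpace.single j 1) *
            fderiv ℝ P y (EuclideanSpace.single j 1))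
        = fun y =>
          (((1 / 2 : ℝ) * (fderiv ℝ G y (EuclideanSpace.single j 1)) ^ 2 +
            fderiv ℝ (fun y' => fderiv ℝ G y' (EuclideanSpace.single j 1)) y
              (EuclideanSpace.single j 1)) * P y
            - (1 / 2 : ℝ) * (fderiv ℝ G y (EuclideanSpace.single j 1)) ^ 2 * P y)
          + fderiv ℝ G y (EuclideanSpace.single j 1) *
              fderiv ℝ P y (EuclideanSpace.single j 1) := by
      funext y; ring
    rw [heq]
    exact ((h2 j).sub (hsq j)).add (h4' j)
  -- pointwise identity: integrand = divergence
  have hfun : (fun y => ((∑ j : Fin n,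
        ((1 / 2 : ℝ) * (fderiv ℝ G y (EuclideanSpace.single j 1)) ^ 2 +
          fderiv ℝ (fun y' => fderiv ℝ G y' (EuclideanSpace.single j 1)) y
            (EuclideanSpace.single j 1)) * P y)
      - ((1 / 2 : ℝ) * (‖gradient G y - gradient (fun y' => Real.log (P y')) y‖ ^ 2 * P y)
        - (1 / 2 : ℝ) * (‖gradient (fun y' => Real.log (P y')) y‖ ^ 2 * P y))))
      = fun y => ∑ j : Fin n,
          (fderiv ℝ (fun y' => fderiv ℝ G y' (EuclideanSpace.single j 1)) y
              (EuclideanSpace.single j 1) * P y +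
            fderiv ℝ G y (EuclideanSpace.single j 1) *
              fderiv ℝ P y (EuclideanSpace.single j 1)) := by
    funext y
    rw [hsubnorm y, hlognorm y, Finset.sum_mul, Finset.sum_mul, Finset.mul_sum, Finset.mul_sum,
      ← Finset.sum_sub_distrib, ← Finset.sum_sub_distrib]
    refine Finset.sum_congr rfl fun j _ => ?_
    rw [← hBP j y]
    ring
  rw [hfun, integral_finset_sum _ (fun j _ => hW j)]
  refine Finset.sum_eq_zero fun j _ => ?_
  exact sm_ibp_zero j G P hGc hPc (hbd j) (hW j)

/-- Score matching identity: the Fisher divergence equals the tractable objective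
`∑_j ∫∫ [ (1/2)(∂g/∂y_j)² + ∂²g/∂y_j² ] p` plus a constant `C` not depending on `g`.
Here `∇_y log q(y|x) = ∇_y log p(y,x)` since the `x`-marginal cancels under `∇_y`. -/
theorem score_matching_identity
    {dy dx : ℕ}
    (p g : EuclideanSpace ℝ (Fin dy) × EuclideanSpace ℝ (Fin dx) → ℝ)
    (hp_pos : ∀ yx, 0 < p yx) (hp_prob : ∫ yx, p yx = 1)
    (hp_diff : ∀ x, ContDiff ℝ 1 (fun y => p (y, x)))
    (hg_diff : ∀ x, ContDiff ℝ 2 (fun y => g (y, x)))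
    -- boundary condition: for each j and x, (∂g/∂y_j)(y,x)·p(y,x) → 0 as |y_j| → ∞
    (hbd : ∀ (j : Fin dy) (x : EuclideanSpace ℝ (Fin dx)) (y : EuclideanSpace ℝ (Fin dy)),
      Tendsto (fun t : ℝ =>
          (fderiv ℝ (fun y' => g (y', x)) (y + (t - y j) • EuclideanSpace.single j 1)
              (EuclideanSpace.single j 1)) *
            p (y + (t - y j) • EuclideanSpace.single j 1, x))
        (cocompact ℝ) (nhds 0))
    -- integrability of all terms appearing below
    (hint1 : Integrable fun yx : EuclideanSpace ℝ (Fin dy) × EuclideanSpace ℝ (Fin dx) =>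
      ‖gradient (fun y => g (y, yx.2)) yx.1 -
        gradient (fun y => Real.log (p (y, yx.2))) yx.1‖ ^ 2 * p yx)
    (hint2 : ∀ j : Fin dy,
      Integrable fun yx : EuclideanSpace ℝ (Fin dy) × EuclideanSpace ℝ (Fin dx) =>
        ((1 / 2 : ℝ) * (fderiv ℝ (fun y => g (y, yx.2)) yx.1 (EuclideanSpace.single j 1)) ^ 2 +
          fderiv ℝ (fun y => fderiv ℝ (fun y' => g (y', yx.2)) y (EuclideanSpace.single j 1))
            yx.1 (EuclideanSpace.single j 1)) * p yx)
    (hint3 : Integrable fun yx : EuclideanSpace ℝ (Fin dy) × EuclideanSpace ℝ (Fin dx) =>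
      ‖gradient (fun y => Real.log (p (y, yx.2))) yx.1‖ ^ 2 * p yx)
    (hint4 : ∀ j : Fin dy,
      Integrable fun yx : EuclideanSpace ℝ (Fin dy) × EuclideanSpace ℝ (Fin dx) =>
        (fderiv ℝ (fun y => g (y, yx.2)) yx.1 (EuclideanSpace.single j 1)) *
          (fderiv ℝ (fun y => Real.log (p (y, yx.2))) yx.1 (EuclideanSpace.single j 1)) * p yx) :
    (1 / 2 : ℝ) * ∫ yx : EuclideanSpace ℝ (Fin dy) × EuclideanSpace ℝ (Fin dx),
        ‖gradient (fun y => g (y, yx.2)) yx.1 -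
          gradient (fun y => Real.log (p (y, yx.2))) yx.1‖ ^ 2 * p yx
      = (∑ j : Fin dy,
          ∫ yx : EuclideanSpace ℝ (Fin dy) × EuclideanSpace ℝ (Fin dx),
            ((1 / 2 : ℝ) *
                (fderiv ℝ (fun y => g (y, yx.2)) yx.1 (EuclideanSpace.single j 1)) ^ 2 +
              fderiv ℝ
                  (fun y => fderiv ℝ (fun y' => g (y', yx.2)) y (EuclideanSpace.single j 1))
                  yx.1 (EuclideanSpace.single j 1)) * p yx)
        + (1 / 2 : ℝ) * ∫ yx : EuclideanSpace ℝ (Fin dy) × EuclideanSpace ℝ (Fin dx),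
            ‖gradient (fun y => Real.log (p (y, yx.2))) yx.1‖ ^ 2 * p yx := by
  have hFsum : Integrable (fun yx : EuclideanSpace ℝ (Fin dy) × EuclideanSpace ℝ (Fin dx) =>
      ∑ j : Fin dy,
        ((1 / 2 : ℝ) * (fderiv ℝ (fun y => g (y, yx.2)) yx.1 (EuclideanSpace.single j 1)) ^ 2 +
          fderiv ℝ (fun y => fderiv ℝ (fun y' => g (y', yx.2)) y (EuclideanSpace.single j 1))
            yx.1 (EuclideanSpace.single j 1)) * p yx) :=
    integrable_finset_sum _ (fun j _ => hint2 j)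
  have hh : Integrable (fun yx : EuclideanSpace ℝ (Fin dy) × EuclideanSpace ℝ (Fin dx) =>
      (1 / 2 : ℝ) * (‖gradient (fun y => g (y, yx.2)) yx.1 -
          gradient (fun y => Real.log (p (y, yx.2))) yx.1‖ ^ 2 * p yx)
        - (1 / 2 : ℝ) * (‖gradient (fun y => Real.log (p (y, yx.2))) yx.1‖ ^ 2 * p yx)) :=
    (hint1.const_mul _).sub (hint3.const_mul _)
  have key : ∫ yx : EuclideanSpace ℝ (Fin dy) × EuclideanSpace ℝ (Fin dx),
      ((∑ j : Fin dy,
        ((1 / 2 : ℝ) * (fderiv ℝ (fun y => g (y, yx.2)) yx.1 (EuclideanSpace.single j 1)) ^ 2 +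
          fderiv ℝ (fun y => fderiv ℝ (fun y' => g (y', yx.2)) y (EuclideanSpace.single j 1))
            yx.1 (EuclideanSpace.single j 1)) * p yx)
      - ((1 / 2 : ℝ) * (‖gradient (fun y => g (y, yx.2)) yx.1 -
            gradient (fun y => Real.log (p (y, yx.2))) yx.1‖ ^ 2 * p yx)
        - (1 / 2 : ℝ) * (‖gradient (fun y => Real.log (p (y, yx.2))) yx.1‖ ^ 2 * p yx))) = 0 := by
    have hD : Integrable (fun yx : EuclideanSpace ℝ (Fin dy) × EuclideanSpace ℝ (Fin dx) =>
      ((∑ j : Fin dy,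
        ((1 / 2 : ℝ) * (fderiv ℝ (fun y => g (y, yx.2)) yx.1 (EuclideanSpace.single j 1)) ^ 2 +
          fderiv ℝ (fun y => fderiv ℝ (fun y' => g (y', yx.2)) y (EuclideanSpace.single j 1))
            yx.1 (EuclideanSpace.single j 1)) * p yx)
      - ((1 / 2 : ℝ) * (‖gradient (fun y => g (y, yx.2)) yx.1 -
            gradient (fun y => Real.log (p (y, yx.2))) yx.1‖ ^ 2 * p yx)
        - (1 / 2 : ℝ) * (‖gradient (fun y => Real.log (p (y, yx.2))) yx.1‖ ^ 2 * p yx)))) (volume.prod volume) := by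
      rw [← Measure.volume_eq_prod]; exact hFsum.sub hh
    rw [Measure.volume_eq_prod, integral_prod_symm _ hD]
    have h1ae : ∀ᵐ x : EuclideanSpace ℝ (Fin dx),
        Integrable (fun y : EuclideanSpace ℝ (Fin dy) =>
          ‖gradient (fun y' => g (y', x)) y -
            gradient (fun y' => Real.log (p (y', x))) y‖ ^ 2 * p (y, x)) := by
      have h := hint1; rw [Measure.volume_eq_prod] at h; exact h.prod_left_ae
    have h3ae : ∀ᵐ x : EuclideanSpace ℝ (Fin dx),
        Integrable (fun y : EuclideanSpace ℝ (Fin dy) =>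
          ‖gradient (fun y' => Real.log (p (y', x))) y‖ ^ 2 * p (y, x)) := by
      have h := hint3; rw [Measure.volume_eq_prod] at h; exact h.prod_left_ae
    have h2ae : ∀ᵐ x : EuclideanSpace ℝ (Fin dx), ∀ j : Fin dy,
        Integrable (fun y : EuclideanSpace ℝ (Fin dy) =>
          ((1 / 2 : ℝ) * (fderiv ℝ (fun y' => g (y', x)) y (EuclideanSpace.single j 1)) ^ 2 +
            fderiv ℝ (fun y' => fderiv ℝ (fun y'' => g (y'', x)) y' (EuclideanSpace.single j 1))
              y (EuclideanSpace.single j 1)) * p (y, x)) := by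
      rw [ae_all_iff]
      intro j
      have h := hint2 j; rw [Measure.volume_eq_prod] at h; exact h.prod_left_ae
    have h4ae : ∀ᵐ x : EuclideanSpace ℝ (Fin dx), ∀ j : Fin dy,
        Integrable (fun y : EuclideanSpace ℝ (Fin dy) =>
          fderiv ℝ (fun y' => g (y', x)) y (EuclideanSpace.single j 1) *
            fderiv ℝ (fun y' => Real.log (p (y', x))) y (EuclideanSpace.single j 1) *
              p (y, x)) := by
      rw [ae_all_iff]
      intro j
      have h := hint4 j; rw [Measure.volume_eq_prod] at h; exact h.prod_left_ae
    refine Eq.trans (integral_congr_ae ?_) (integral_zero _ _)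
    filter_upwards [h1ae, h3ae, h2ae, h4ae] with x hx1 hx3 hx2 hx4
    exact sm_slice (fun y => g (y, x)) (fun y => p (y, x)) (hg_diff x) (hp_diff x)
      (fun y => hp_pos (y, x)) (fun j y => hbd j x y) hx1 hx2 hx3 hx4
  have e0 := integral_sub hFsum hh
  rw [key] at e0
  have e1 := integral_finset_sum (μ := volume) Finset.univ (fun (j : Fin dy) _ => hint2 j)
  have e2 := integral_sub (hint1.const_mul (1/2 : ℝ)) (hint3.const_mul (1/2 : ℝ))
  rw [integral_const_mul, integral_const_mul] at e2
  rw [e1, e2] at e0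
  linarith
end

section
/- Theorem (NKC performs SDR): Assume log q(y|x) is continuous on compact Y × X, q(y|x) > 0, Y is convex with nonempty interior, and ∇_y log q(y|x) = ∑_{i=1}^d ∇_y w_i(y) h_i(x) for C¹ functions w_i and continuous h = (h_1,…,h_d). Let p(y|x) = q(y|x)/∫q(y'|x)dy' be the normalized conditional density. Then p(y|x) is a measurable function of (y, h(x)); in particular h(x₁) = h(x₂) implies p(·|x₁) = p(·|x₂), so the conditional distribution of y given x depends on x only through the d-dimensional representation h(x). -/
open MeasureTheory
open scoped BigOperators

/-- Theorem 1 (NKC performs SDR): if `∇_y log q(y|x) = ∑ i, h_i(x) • ∇_y w_i(y)` on a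
compact convex `Y` with nonempty interior, then the normalized conditional density
`p(y|x) = q(y|x)/∫_Y q(y'|x) dy'` is a measurable function of `(y, h(x))`; in particular
`h(x₁) = h(x₂)` implies `p(·|x₁) = p(·|x₂)`. -/
theorem nkc_sufficient_dimension_reduction
    {dy dx d : ℕ}
    (Y : Set (EuclideanSpace ℝ (Fin dy))) (X : Set (EuclideanSpace ℝ (Fin dx)))
    (hY_comp : IsCompact Y) (hY_conv : Convex ℝ Y) (hY_int : (interior Y).Nonempty)
    (hX_comp : IsCompact X)
    (q : EuclideanSpace ℝ (Fin dy) → EuclideanSpace ℝ (Fin dx) → ℝ)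
    (hq_pos : ∀ y ∈ Y, ∀ x ∈ X, 0 < q y x)
    (hq_cont : ContinuousOn (fun yx : EuclideanSpace ℝ (Fin dy) × EuclideanSpace ℝ (Fin dx) =>
      Real.log (q yx.1 yx.2)) (Y ×ˢ X))
    (hq_diff : ∀ x ∈ X, DifferentiableOn ℝ (fun y => Real.log (q y x)) Y)
    (w : Fin d → EuclideanSpace ℝ (Fin dy) → ℝ) (hw : ∀ i, ContDiff ℝ 1 (w i))
    (h : Fin d → EuclideanSpace ℝ (Fin dx) → ℝ) (hh : ∀ i, Continuous (h i))
    (hgrad : ∀ x ∈ X, ∀ y ∈ interior Y,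
      gradient (fun y' => Real.log (q y' x)) y = ∑ i, h i x • gradient (w i) y)
    (p : EuclideanSpace ℝ (Fin dy) → EuclideanSpace ℝ (Fin dx) → ℝ)
    (hp : ∀ y x, p y x = q y x / ∫ y' in Y, q y' x) :
    (∃ Φ : EuclideanSpace ℝ (Fin dy) × EuclideanSpace ℝ (Fin d) → ℝ,
        Measurable Φ ∧
        ∀ y ∈ Y, ∀ x ∈ X, p y x = Φ (y, WithLp.toLp 2 (fun i => h i x))) ∧
    (∀ x₁ ∈ X, ∀ x₂ ∈ X, (∀ i, h i x₁ = h i x₂) → ∀ y ∈ Y, p y x₁ = p y x₂) := by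
  classical
  obtain ⟨y₀, hy₀⟩ := hY_int
  have hy₀Y : y₀ ∈ Y := interior_subset hy₀
  -- The "exponential family" kernel
  set E : EuclideanSpace ℝ (Fin d) → EuclideanSpace ℝ (Fin dy) → ℝ :=
    fun z y => Real.exp (∑ i, z i * w i y) with hE
  set Φ : EuclideanSpace ℝ (Fin dy) × EuclideanSpace ℝ (Fin d) → ℝ :=
    fun yz => E yz.2 yz.1 / ∫ y' in Y, E yz.2 y' with hΦ
  -- continuity of the kernel in both variables
  have hEcont : Continuous (fun zy : EuclideanSpace ℝ (Fin d) × EuclideanSpace ℝ (Fin dy) =>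
      E zy.1 zy.2) := by
    apply Real.continuous_exp.comp
    apply continuous_finset_sum
    intro i _
    exact ((EuclideanSpace.proj i).continuous.comp continuous_fst).mul
      ((hw i).continuous.comp continuous_snd)
  -- measurability of Φ
  have hden_meas : Measurable (fun z : EuclideanSpace ℝ (Fin d) => ∫ y' in Y, E z y') := by
    have : StronglyMeasurable (fun zy : EuclideanSpace ℝ (Fin d) × EuclideanSpace ℝ (Fin dy) =>
        E zy.1 zy.2) := hEcont.stronglyMeasurable
    exact this.integral_prod_right'.measurable
  have hΦmeas : Measurable Φ := by
    apply Measurable.div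
    · exact (hEcont.comp continuous_swap).measurable
    · exact hden_meas.comp measurable_snd
  -- key structural identity : log q(y|x) = ∑ h_i(x) w_i(y) + c(x) on Y
  have key : ∀ x ∈ X, ∀ y ∈ Y,
      Real.log (q y x) - ∑ i, h i x * w i y
        = Real.log (q y₀ x) - ∑ i, h i x * w i y₀ := by
    intro x hx
    set F : EuclideanSpace ℝ (Fin dy) → ℝ :=
      fun y => Real.log (q y x) - ∑ i, h i x * w i y with hF
    -- derivative of F is 0 on the interior
    have hF0 : ∀ y ∈ interior Y, HasFDerivAt F (0 : EuclideanSpace ℝ (Fin dy) →L[ℝ] ℝ) y := by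
      intro y hy
      have hYnhds : Y ∈ nhds y := mem_interior_iff_mem_nhds.mp hy
      have hlogd : DifferentiableAt ℝ (fun y' => Real.log (q y' x)) y :=
        (hq_diff x hx).differentiableAt hYnhds
      have hsum : HasFDerivAt (fun y' => ∑ i, h i x * w i y')
          (∑ i, h i x • fderiv ℝ (w i) y) y := by
        apply HasFDerivAt.fun_sum
        intro i _
        exact (((hw i).differentiable one_ne_zero) y).hasFDerivAt.const_mul (h i x)
      have hFd : HasFDerivAt F
          (fderiv ℝ (fun y' => Real.log (q y' x)) y - ∑ i, h i x • fderiv ℝ (w i) y) y :=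
        hlogd.hasFDerivAt.sub hsum
      have heq : fderiv ℝ (fun y' => Real.log (q y' x)) y = ∑ i, h i x • fderiv ℝ (w i) y := by
        have h1 : fderiv ℝ (fun y' => Real.log (q y' x)) y
            = InnerProductSpace.toDual ℝ _ (gradient (fun y' => Real.log (q y' x)) y) := by
          rw [gradient, LinearIsometryEquiv.apply_symm_apply]
        rw [h1, hgrad x hx y hy, map_sum]
        refine Finset.sum_congr rfl fun i _ => ?_
        rw [_root_.map_smul, gradient, LinearIsometryEquiv.apply_symm_apply]
      rw [heq, sub_self] at hFd
      exact hFd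
    -- F is constant on the interior
    have hconst : ∀ y ∈ interior Y, F y = F y₀ := by
      intro y hy
      refine Convex.is_const_of_fderivWithin_eq_zero (hY_conv.interior)
        (fun z hz => ((hF0 z hz).differentiableAt).differentiableWithinAt)
        (fun z hz => ?_) hy hy₀
      rw [fderivWithin_of_isOpen isOpen_interior hz]
      exact (hF0 z hz).fderiv
    -- continuity of F on Y
    have hFc : ContinuousOn F Y := by
      apply ContinuousOn.sub
      · exact hq_cont.comp (Continuous.continuousOn (continuous_id.prodMk continuous_const))
          (fun y hy => Set.mk_mem_prod hy hx)
      · exact (continuous_finset_sum Finset.univ fun i _ =>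
          (continuous_const.mul (hw i).continuous)).continuousOn
    -- extend by density to the whole of Y
    intro y hy
    set seq : ℕ → EuclideanSpace ℝ (Fin dy) := fun n => y + (1 / (n + 1 : ℝ)) • (y₀ - y) with hseq
    have hmem : ∀ n, seq n ∈ interior Y := by
      intro n
      apply hY_conv.add_smul_sub_mem_interior hy hy₀
      constructor
      · positivity
      · rw [div_le_one (by positivity)]
        linarith [(Nat.cast_nonneg n : (0:ℝ) ≤ n)]
    have htend : Filter.Tendsto seq Filter.atTop (nhds y) := by
      have h1 : Filter.Tendsto (fun n : ℕ => (1 / (n + 1 : ℝ)) • (y₀ - y)) Filter.atTop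
          (nhds ((0 : ℝ) • (y₀ - y))) :=
        (tendsto_one_div_add_atTop_nhds_zero_nat).smul_const (y₀ - y)
      rw [zero_smul] at h1
      have h2 : Filter.Tendsto (fun n : ℕ => y + (1 / (n + 1 : ℝ)) • (y₀ - y)) Filter.atTop
          (nhds (y + 0)) := tendsto_const_nhds.add h1
      rw [add_zero] at h2
      exact h2
    have htendY : Filter.Tendsto seq Filter.atTop (nhdsWithin y Y) := by
      rw [tendsto_nhdsWithin_iff]
      exact ⟨htend, Filter.Eventually.of_forall fun n => interior_subset (hmem n)⟩
    have hFtend : Filter.Tendsto (fun n => F (seq n)) Filter.atTop (nhds (F y)) :=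
      (hFc y hy).tendsto.comp htendY
    have hFconst : (fun n => F (seq n)) = fun _ => F y₀ := by
      funext n; exact hconst _ (hmem n)
    rw [hFconst] at hFtend
    exact tendsto_nhds_unique hFtend tendsto_const_nhds
  -- representation of q on Y
  have hq_rep : ∀ x ∈ X, ∀ y ∈ Y,
      q y x = Real.exp (Real.log (q y₀ x) - ∑ i, h i x * w i y₀)
        * E (WithLp.toLp 2 (fun i => h i x)) y := by
    intro x hx y hy
    have h1 : Real.log (q y x) = (Real.log (q y₀ x) - ∑ i, h i x * w i y₀)
        + ∑ i, h i x * w i y := by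
      have := key x hx y hy
      linarith
    calc q y x = Real.exp (Real.log (q y x)) := (Real.exp_log (hq_pos y hy x hx)).symm
      _ = _ := by rw [h1, Real.exp_add]
  -- representation of p via Φ
  have hrep : ∀ y ∈ Y, ∀ x ∈ X, p y x = Φ (y, WithLp.toLp 2 (fun i => h i x)) := by
    intro y hy x hx
    have hYmeas : MeasurableSet Y := hY_comp.isClosed.measurableSet
    have hint : (∫ y' in Y, q y' x)
        = Real.exp (Real.log (q y₀ x) - ∑ i, h i x * w i y₀)
          * ∫ y' in Y, E (WithLp.toLp 2 (fun i => h i x)) y' := by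
      rw [← integral_const_mul]
      exact setIntegral_congr_fun hYmeas (fun y' hy' => hq_rep x hx y' hy')
    rw [hp, hq_rep x hx y hy, hint, hΦ]
    exact mul_div_mul_left _ _ (Real.exp_ne_zero _)
  refine ⟨⟨Φ, hΦmeas, hrep⟩, ?_⟩
  intro x₁ hx₁ x₂ hx₂ hhx y hy
  have hfun : (WithLp.toLp 2 (fun i => h i x₁) : EuclideanSpace ℝ (Fin d)) = WithLp.toLp 2 (fun i => h i x₂) :=
    congrArg (WithLp.toLp 2) (funext fun i => hhx i)
  rw [hrep y hy x₁ hx₁, hrep y hy x₂ hx₂, hfun]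
end
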